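/- If g : ℕ → ℝ is convex (i.e., g(ℓ+2) + g(ℓ) ≥ 2 g(ℓ+1) for all ℓ), then p ↦ E[g(X(n,p))] is convex in p on [0,1]; if g is concave, the expectation is concave in p. Moreover, if n > 1 and (g(2)+g(0))/2 ≠ g(1), the convexity/concavity is strict. -/

import Mathlib

open Finset

noncomputable def binExp (n : ℕ) (p : ℝ) (g : ℕ → ℝ) : ℝ :=
  ∑ ℓ ∈ Finset.range (n + 1), (n.choose ℓ : ℝ) * p ^ ℓ * (1 - p) ^ (n - ℓ) * g ℓ

noncomputable def bP (n : ℕ) (g : ℕ → ℝ) : Polynomial ℝ :=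
  ∑ ℓ ∈ Finset.range (n + 1), g ℓ • bernsteinPolynomial ℝ n ℓ

lemma bP_eval (n : ℕ) (g : ℕ → ℝ) (p : ℝ) : (bP n g).eval p = binExp n p g := by
  simp only [bP, binExp, Polynomial.eval_finset_sum, Polynomial.eval_smul, bernsteinPolynomial,
    Polynomial.eval_mul, Polynomial.eval_pow, Polynomial.eval_natCast, Polynomial.eval_sub,
    Polynomial.eval_one, Polynomial.eval_X, smul_eq_mul]
  exact Finset.sum_congr rfl fun ℓ _ => by ring

lemma bern_top (n : ℕ) : bernsteinPolynomial ℝ n (n + 1) = 0 := by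
  simp [bernsteinPolynomial, Nat.choose_eq_zero_of_lt (Nat.lt_succ_self n)]

lemma bP_deriv (n : ℕ) (g : ℕ → ℝ) :
    (bP (n + 1) g).derivative = ((n : ℝ) + 1) • bP n (fun ℓ => g (ℓ + 1) - g ℓ) := by
  have hshift : ∑ ν ∈ Finset.range (n + 1), Polynomial.C (g (ν + 1)) * bernsteinPolynomial ℝ n (ν + 1)
      = ∑ ℓ ∈ Finset.range (n + 1), Polynomial.C (g ℓ) * bernsteinPolynomial ℝ n ℓ
        - Polynomial.C (g 0) * bernsteinPolynomial ℝ n 0 := by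
    have h2 : ∑ ℓ ∈ Finset.range (n + 2), Polynomial.C (g ℓ) * bernsteinPolynomial ℝ n ℓ
        = ∑ ℓ ∈ Finset.range (n + 1), Polynomial.C (g ℓ) * bernsteinPolynomial ℝ n ℓ := by
      rw [Finset.sum_range_succ, bern_top]; simp
    rw [← h2]
    conv_rhs => rw [Finset.sum_range_succ']
    ring
  rw [bP, map_sum, Finset.sum_range_succ']
  simp only [Polynomial.derivative_smul]
  simp only [bernsteinPolynomial.derivative_succ, bernsteinPolynomial.derivative_zero,
    Nat.succ_sub_one]
  simp only [Polynomial.smul_eq_C_mul, bP, Finset.smul_sum, map_sub, map_add, map_one,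
    map_natCast, Nat.cast_add, Nat.cast_one]
  simp only [mul_sub, sub_mul, Finset.sum_sub_distrib, ← Finset.mul_sum]
  have r1 : ∑ x ∈ Finset.range (n + 1), Polynomial.C (g (x + 1)) * ((((n : ℕ) : Polynomial ℝ) + 1)
        * bernsteinPolynomial ℝ n x)
      = (((n : ℕ) : Polynomial ℝ) + 1) * ∑ x ∈ Finset.range (n + 1),
        Polynomial.C (g (x + 1)) * bernsteinPolynomial ℝ n x := by
    rw [Finset.mul_sum]; exact Finset.sum_congr rfl fun _ _ => by ring
  have r2 : ∑ x ∈ Finset.range (n + 1), Polynomial.C (g (x + 1)) * ((((n : ℕ) : Polynomial ℝ) + 1)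
        * bernsteinPolynomial ℝ n (x + 1))
      = (((n : ℕ) : Polynomial ℝ) + 1) * ∑ x ∈ Finset.range (n + 1),
        Polynomial.C (g (x + 1)) * bernsteinPolynomial ℝ n (x + 1) := by
    rw [Finset.mul_sum]; exact Finset.sum_congr rfl fun _ _ => by ring
  rw [r1, r2]
  linear_combination (-(((n : ℕ) : Polynomial ℝ) + 1)) * hshift

lemma bP_zero_deriv (g : ℕ → ℝ) : (bP 0 g).derivative = 0 := by
  simp [bP, bernsteinPolynomial]

lemma bP_deriv2 (m : ℕ) (g : ℕ → ℝ) :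
    (bP (m + 2) g).derivative.derivative
      = (((m : ℝ) + 2) * ((m : ℝ) + 1)) •
          bP m (fun ℓ => g (ℓ + 2) - 2 * g (ℓ + 1) + g ℓ) := by
  rw [show m + 2 = (m + 1) + 1 from rfl, bP_deriv, Polynomial.derivative_smul, bP_deriv,
    smul_smul]
  have hfun : (fun ℓ => (g (ℓ + 1 + 1) - g (ℓ + 1)) - (g (ℓ + 1) - g ℓ))
      = (fun ℓ => g (ℓ + 2) - 2 * g (ℓ + 1) + g ℓ) := funext fun ℓ => by ring
  rw [hfun]
  congr 1
  push_cast
  ring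

lemma bP_eval_nonneg (m : ℕ) (h : ℕ → ℝ) (hh : ∀ ℓ, 0 ≤ h ℓ) {p : ℝ}
    (hp0 : 0 ≤ p) (hp1 : p ≤ 1) : 0 ≤ (bP m h).eval p := by
  rw [bP_eval]
  apply Finset.sum_nonneg
  intro ℓ _
  have h1 : (0:ℝ) ≤ 1 - p := by linarith
  have := hh ℓ
  positivity

lemma bP_eval_pos (m : ℕ) (h : ℕ → ℝ) (hh : ∀ ℓ, 0 ≤ h ℓ) (h0 : 0 < h 0) {p : ℝ}
    (hp0 : 0 ≤ p) (hp1 : p < 1) : 0 < (bP m h).eval p := by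
  rw [bP_eval, binExp]
  apply Finset.sum_pos'
  · intro ℓ _
    have h1 : (0:ℝ) ≤ 1 - p := by linarith
    have := hh ℓ
    positivity
  · refine ⟨0, Finset.mem_range.mpr (Nat.succ_pos m), ?_⟩
    have h1 : (0:ℝ) < 1 - p := by linarith
    simp only [Nat.choose_zero_right, Nat.cast_one, pow_zero, one_mul, mul_one, Nat.sub_zero]
    positivity

lemma deriv_binExp (n : ℕ) (g : ℕ → ℝ) :
    deriv (fun p => binExp n p g) = fun p => ((bP n g).derivative).eval p := by
  have hfe : (fun p => binExp n p g) = fun p => (bP n g).eval p :=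
    funext fun p => (bP_eval n g p).symm
  rw [hfe]
  exact funext fun p => Polynomial.deriv _

lemma deriv2_binExp (n : ℕ) (g : ℕ → ℝ) (p : ℝ) :
    deriv^[2] (fun p => binExp n p g) p = ((bP n g).derivative.derivative).eval p := by
  have : deriv^[2] (fun p => binExp n p g) = deriv (deriv (fun p => binExp n p g)) := by
    simp [Function.iterate_succ, Function.iterate_one]
  rw [this, deriv_binExp]
  exact Polynomial.deriv _

lemma deriv2_nonneg_of_convex (n : ℕ) (g : ℕ → ℝ)
    (h : ∀ ℓ, 2 * g (ℓ + 1) ≤ g (ℓ + 2) + g ℓ) {p : ℝ} (hp0 : 0 ≤ p) (hp1 : p ≤ 1) :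
    0 ≤ deriv^[2] (fun p => binExp n p g) p := by
  rw [deriv2_binExp]
  match n with
  | 0 => simp [bP_zero_deriv]
  | 1 =>
    rw [bP_deriv 0 g, Polynomial.derivative_smul, bP_zero_deriv]
    simp
  | (m + 2) =>
    rw [bP_deriv2, Polynomial.eval_smul, smul_eq_mul]
    have hc : (0:ℝ) ≤ ((m : ℝ) + 2) * ((m : ℝ) + 1) := by positivity
    refine mul_nonneg hc (bP_eval_nonneg m _ (fun ℓ => by have := h ℓ; simp; linarith) hp0 hp1)

lemma aux_convex (n : ℕ) (g : ℕ → ℝ) (h : ∀ ℓ, 2 * g (ℓ + 1) ≤ g (ℓ + 2) + g ℓ) :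
    ConvexOn ℝ (Set.Icc (0 : ℝ) 1) (fun p => binExp n p g) := by
  have hfe : (fun p => binExp n p g) = fun p => (bP n g).eval p :=
    funext fun p => (bP_eval n g p).symm
  apply convexOn_of_deriv2_nonneg (convex_Icc 0 1)
  · rw [hfe]; exact (Polynomial.continuous _).continuousOn
  · rw [hfe]; exact (Polynomial.differentiable _).differentiableOn
  · rw [deriv_binExp]; exact (Polynomial.differentiable _).differentiableOn
  · intro x hx
    rw [interior_Icc] at hx
    exact deriv2_nonneg_of_convex n g h hx.1.le hx.2.le

lemma aux_strict (n : ℕ) (g : ℕ → ℝ) (hn : 1 < n) (hne : (g 2 + g 0) / 2 ≠ g 1)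
    (h : ∀ ℓ, 2 * g (ℓ + 1) ≤ g (ℓ + 2) + g ℓ) :
    StrictConvexOn ℝ (Set.Icc (0 : ℝ) 1) (fun p => binExp n p g) := by
  obtain ⟨m, rfl⟩ : ∃ m, n = m + 2 := ⟨n - 2, by omega⟩
  have hfe : (fun p => binExp (m + 2) p g) = fun p => (bP (m + 2) g).eval p :=
    funext fun p => (bP_eval (m + 2) g p).symm
  apply strictConvexOn_of_deriv2_pos (convex_Icc 0 1)
  · rw [hfe]; exact (Polynomial.continuous _).continuousOn
  · intro x hx
    rw [interior_Icc] at hx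
    rw [deriv2_binExp, bP_deriv2, Polynomial.eval_smul, smul_eq_mul]
    have hc : (0:ℝ) < ((m : ℝ) + 2) * ((m : ℝ) + 1) := by positivity
    refine mul_pos hc (bP_eval_pos m _ (fun ℓ => by have := h ℓ; simp; linarith) ?_ hx.1.le hx.2)
    have h0 := h 0
    rcases lt_or_eq_of_le h0 with hlt | heq
    · show (0:ℝ) < g (0 + 2) - 2 * g (0 + 1) + g 0
      norm_num
      linarith
    · exact absurd (by linarith) hne

lemma binExp_neg (n : ℕ) (p : ℝ) (g : ℕ → ℝ) :
    binExp n p (fun ℓ => -g ℓ) = -binExp n p g := by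
  rw [binExp, binExp, ← Finset.sum_neg_distrib]
  exact Finset.sum_congr rfl fun ℓ _ => by ring

theorem stmt2 (n : ℕ) (g : ℕ → ℝ) :
    ((∀ ℓ, 2 * g (ℓ + 1) ≤ g (ℓ + 2) + g ℓ) →
      ConvexOn ℝ (Set.Icc (0 : ℝ) 1) (fun p => binExp n p g)) ∧
    ((∀ ℓ, g (ℓ + 2) + g ℓ ≤ 2 * g (ℓ + 1)) →
      ConcaveOn ℝ (Set.Icc (0 : ℝ) 1) (fun p => binExp n p g)) ∧
    (1 < n → (g 2 + g 0) / 2 ≠ g 1 →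
      ((∀ ℓ, 2 * g (ℓ + 1) ≤ g (ℓ + 2) + g ℓ) →
        StrictConvexOn ℝ (Set.Icc (0 : ℝ) 1) (fun p => binExp n p g)) ∧
      ((∀ ℓ, g (ℓ + 2) + g ℓ ≤ 2 * g (ℓ + 1)) →
        StrictConcaveOn ℝ (Set.Icc (0 : ℝ) 1) (fun p => binExp n p g))) := by
  have hneg : ∀ h : ℕ → ℝ, (fun p => binExp n p h) = -(fun p => binExp n p (fun ℓ => -h ℓ)) := by
    intro h
    funext p
    simp [binExp_neg]
  refine ⟨fun h => aux_convex n g h, fun h => ?_, fun hn hne => ⟨fun h => aux_strict n g hn hne h,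
    fun h => ?_⟩⟩
  · rw [hneg g]
    exact (aux_convex n (fun ℓ => -g ℓ) (fun ℓ => by simp; linarith [h ℓ])).neg
  · rw [hneg g]
    refine (aux_strict n (fun ℓ => -g ℓ) hn ?_ (fun ℓ => by simp; linarith [h ℓ])).neg
    intro heq
    have heq' : (-g 2 + -g 0) / 2 = -g 1 := heq
    exact hne (by linarith)
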